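/- For all x in (0, √(27/5)), sin(x)/x ≤ cos(x/3)³. -/

import Mathlib

open Real

lemma aux_nonneg (f f' : ℝ → ℝ) (hd : ∀ y, HasDerivAt f (f' y) y)
    (h0 : f 0 = 0) (hf' : ∀ y, 0 ≤ y → 0 ≤ f' y) :
    ∀ x, 0 ≤ x → 0 ≤ f x := by
  intro x hx
  have hdiff : Differentiable ℝ f := fun y => (hd y).differentiableAt
  have hmono : MonotoneOn f (Set.Ici 0) := by
    apply monotoneOn_of_deriv_nonneg (convex_Ici 0) hdiff.continuous.continuousOn
      hdiff.differentiableOn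
    intro y hy
    rw [(hd y).deriv]
    exact hf' y (le_of_lt (by simpa using hy))
  have := hmono (Set.self_mem_Ici) (Set.mem_Ici.2 hx) hx
  linarith [h0 ▸ this]

lemma sin_ge_poly (x : ℝ) (hx : 0 ≤ x) : x - x^3/6 ≤ Real.sin x := by
  have := aux_nonneg (fun t => Real.sin t - t + t^3/6) (fun t => Real.cos t - 1 + t^2/2)
    (fun y => by
      have h1 := (Real.hasDerivAt_sin y).sub (hasDerivAt_id y)
      have h2 := (hasDerivAt_pow 3 y).div_const 6
      have := h1.add h2
      exact this.congr_deriv (by push_cast; ring))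
    (by simp)
    (fun y hy => by nlinarith [Real.one_sub_sq_div_two_le_cos (x := y)])
    x hx
  linarith

lemma cos_le_poly (x : ℝ) (hx : 0 ≤ x) : Real.cos x ≤ 1 - x^2/2 + x^4/24 := by
  have := aux_nonneg (fun t => 1 - t^2/2 + t^4/24 - Real.cos t)
    (fun t => -(t) + t^3/6 + Real.sin t)
    (fun y => by
      have h2 := (hasDerivAt_pow 2 y).div_const 2
      have h4 := (hasDerivAt_pow 4 y).div_const 24
      have h := (((hasDerivAt_const y (1:ℝ)).sub h2).add h4).sub (Real.hasDerivAt_cos y)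
      exact h.congr_deriv (by push_cast; ring))
    (by simp)
    (fun y hy => by nlinarith [sin_ge_poly y hy])
    x hx
  linarith

lemma sin_le_poly (x : ℝ) (hx : 0 ≤ x) : Real.sin x ≤ x - x^3/6 + x^5/120 := by
  have := aux_nonneg (fun t => t - t^3/6 + t^5/120 - Real.sin t)
    (fun t => 1 - t^2/2 + t^4/24 - Real.cos t)
    (fun y => by
      have h3 := (hasDerivAt_pow 3 y).div_const 6
      have h5 := (hasDerivAt_pow 5 y).div_const 120
      have h := (((hasDerivAt_id y).sub h3).add h5).sub (Real.hasDerivAt_sin y)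
      exact h.congr_deriv (by push_cast; ring))
    (by simp)
    (fun y hy => by nlinarith [cos_le_poly y hy])
    x hx
  linarith

theorem stmt_12 (x : ℝ) (hx : x ∈ Set.Ioo 0 (Real.sqrt (27 / 5))) :
    Real.sin x / x ≤ Real.cos (x / 3) ^ 3 := by
  obtain ⟨hx0, hxu⟩ := hx
  have hx2 : x^2 < 27/5 := by
    have := (Real.lt_sqrt hx0.le).mp hxu
    linarith
  have hc : 1 - x^2/18 ≤ Real.cos (x/3) := by
    have := Real.one_sub_sq_div_two_le_cos (x := x/3)
    nlinarith
  have hcnn : (0:ℝ) ≤ 1 - x^2/18 := by nlinarith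
  have hcube : (1 - x^2/18)^3 ≤ Real.cos (x/3)^3 := by
    exact pow_le_pow_left₀ hcnn hc 3
  have hs := sin_le_poly x hx0.le
  have hdiv : Real.sin x / x ≤ 1 - x^2/6 + x^4/120 := by
    rw [div_le_iff₀ hx0]
    nlinarith
  nlinarith [hcube, hdiv, mul_le_mul_of_nonneg_left hx2.le (by positivity : (0:ℝ) ≤ x^4)]
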